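/- arXiv:1804.06071 — 3 statements merged into one kernel-verified Lean document; each statement's English description precedes it below -/
import Mathlib

section
/- The set of permutations of [n] avoiding 132, 213, and 321 is exactly {π_{k,n−k} : 1 ≤ k ≤ n}, where π_{k,ℓ} := (ℓ+1, ..., ℓ+k, 1, ..., ℓ); in particular there are exactly n such permutations. -/
/-- An occurrence of the pattern `σ` in `π` is a strictly increasing choice of
indices whose images under `π` are order-isomorphic to `σ`. -/
def IsOccurrence {m n : ℕ} (σ : Equiv.Perm (Fin m)) (π : Equiv.Perm (Fin n))
    (f : Fin m → Fin n) : Prop :=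
  StrictMono f ∧ ∀ j k : Fin m, π (f j) < π (f k) ↔ σ j < σ k

/-- `numOcc σ π` is the number of occurrences of the pattern `σ` in `π`. -/
noncomputable def numOcc {m n : ℕ} (σ : Equiv.Perm (Fin m)) (π : Equiv.Perm (Fin n)) : ℕ :=
  Nat.card {f : Fin m → Fin n // IsOccurrence σ π f}

def p123 : Equiv.Perm (Fin 3) := 1
def p132 : Equiv.Perm (Fin 3) := Equiv.swap 1 2
def p213 : Equiv.Perm (Fin 3) := Equiv.swap 0 1
def p321 : Equiv.Perm (Fin 3) := Equiv.swap 0 2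
def p231 : Equiv.Perm (Fin 3) := finRotate 3
def p312 : Equiv.Perm (Fin 3) := (finRotate 3)⁻¹

/-- The permutation `(ℓ+1, …, ℓ+k, 1, …, ℓ)` of `[k+ℓ]`. -/
def rotBlock (k ℓ : ℕ) : Equiv.Perm (Fin (k + ℓ)) :=
  finSumFinEquiv.symm.trans ((Equiv.sumComm (Fin k) (Fin ℓ)).trans
    (finSumFinEquiv.trans (finCongr (Nat.add_comm ℓ k))))

lemma rotBlock_val {k ℓ n : ℕ} (h : k + ℓ = n) (i : Fin n) :
    (((finCongr h).permCongr (rotBlock k ℓ)) i).val = (i.val + ℓ) % n := by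
  subst h
  have hi := i.isLt
  have : ((rotBlock k ℓ) i).val = (i.val + ℓ) % (k + ℓ) := by
    rcases lt_or_ge i.val k with hk | hk
    · have hm : (i.val + ℓ) % (k + ℓ) = i.val + ℓ := Nat.mod_eq_of_lt (by omega)
      have h1 : i = Fin.castAdd ℓ ⟨i.val, hk⟩ := by ext; rfl
      rw [hm]
      conv_lhs => rw [rotBlock, Equiv.trans_apply, h1, finSumFinEquiv_symm_apply_castAdd]
      simp [Equiv.sumComm, finSumFinEquiv_apply_right]
      omega
    · have hm : (i.val + ℓ) % (k + ℓ) = i.val - k := by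
        rw [Nat.mod_eq_sub_mod (by omega)]
        have h2 : i.val + ℓ - (k + ℓ) = i.val - k := by omega
        rw [h2, Nat.mod_eq_of_lt (by omega)]
      have h1 : i = Fin.natAdd k ⟨i.val - k, by omega⟩ := by ext; simp; omega
      rw [hm]
      conv_lhs => rw [rotBlock, Equiv.trans_apply, h1, finSumFinEquiv_symm_apply_natAdd]
      simp [Equiv.sumComm, finSumFinEquiv_apply_left]
  simpa [Equiv.permCongr] using this

lemma modForm {n ℓ : ℕ} (x : ℕ) (hx : x < n) (hℓ : ℓ ≤ n) :
    ((x + ℓ) % n = x + ℓ ∧ x + ℓ < n) ∨ ((x + ℓ) % n = x + ℓ - n ∧ n ≤ x + ℓ) := by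
  rcases lt_or_ge (x + ℓ) n with h | h
  · exact Or.inl ⟨Nat.mod_eq_of_lt h, h⟩
  · refine Or.inr ⟨?_, h⟩
    rw [Nat.mod_eq_sub_mod h, Nat.mod_eq_of_lt (by omega)]

lemma rot_avoids {n ℓ : ℕ} (hℓ : ℓ ≤ n) (π : Equiv.Perm (Fin n))
    (hπ : ∀ x, (π x).val = (x.val + ℓ) % n) :
    numOcc p132 π = 0 ∧ numOcc p213 π = 0 ∧ numOcc p321 π = 0 := by
  refine ⟨?_, ?_, ?_⟩
  · rw [numOcc]
    haveI : IsEmpty {f : Fin 3 → Fin n // IsOccurrence p132 π f} := by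
      refine ⟨fun ⟨f, hm, hiff⟩ => ?_⟩
      have hab : f 0 < f 1 := hm (by decide)
      have hbc : f 1 < f 2 := hm (by decide)
      have h1 : π (f 0) < π (f 2) := (hiff 0 2).mpr (by decide)
      have h2 : π (f 2) < π (f 1) := (hiff 2 1).mpr (by decide)
      rw [Fin.lt_def] at hab hbc h1 h2
      rw [hπ, hπ] at h1 h2
      have m0 := modForm (f 0).val (f 0).isLt hℓ
      have m1 := modForm (f 1).val (f 1).isLt hℓ
      have m2 := modForm (f 2).val (f 2).isLt hℓ
      omega
    exact Nat.card_of_isEmpty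
  · rw [numOcc]
    haveI : IsEmpty {f : Fin 3 → Fin n // IsOccurrence p213 π f} := by
      refine ⟨fun ⟨f, hm, hiff⟩ => ?_⟩
      have hab : f 0 < f 1 := hm (by decide)
      have hbc : f 1 < f 2 := hm (by decide)
      have h1 : π (f 1) < π (f 0) := (hiff 1 0).mpr (by decide)
      have h2 : π (f 0) < π (f 2) := (hiff 0 2).mpr (by decide)
      rw [Fin.lt_def] at hab hbc h1 h2
      rw [hπ, hπ] at h1 h2
      have m0 := modForm (f 0).val (f 0).isLt hℓ
      have m1 := modForm (f 1).val (f 1).isLt hℓ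
      have m2 := modForm (f 2).val (f 2).isLt hℓ
      omega
    exact Nat.card_of_isEmpty
  · rw [numOcc]
    haveI : IsEmpty {f : Fin 3 → Fin n // IsOccurrence p321 π f} := by
      refine ⟨fun ⟨f, hm, hiff⟩ => ?_⟩
      have hab : f 0 < f 1 := hm (by decide)
      have hbc : f 1 < f 2 := hm (by decide)
      have h1 : π (f 2) < π (f 1) := (hiff 2 1).mpr (by decide)
      have h2 : π (f 1) < π (f 0) := (hiff 1 0).mpr (by decide)
      rw [Fin.lt_def] at hab hbc h1 h2
      rw [hπ, hπ] at h1 h2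
      have m0 := modForm (f 0).val (f 0).isLt hℓ
      have m1 := modForm (f 1).val (f 1).isLt hℓ
      have m2 := modForm (f 2).val (f 2).isLt hℓ
      omega
    exact Nat.card_of_isEmpty

lemma noOcc_of_card {n : ℕ} (σ : Equiv.Perm (Fin 3)) (π : Equiv.Perm (Fin n))
    (h : numOcc σ π = 0) (f : Fin 3 → Fin n) (hf : IsOccurrence σ π f) : False := by
  haveI : Nonempty {f : Fin 3 → Fin n // IsOccurrence σ π f} := ⟨⟨f, hf⟩⟩
  have := Nat.card_pos (α := {f : Fin 3 → Fin n // IsOccurrence σ π f})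
  rw [numOcc] at h
  omega

lemma fin3_cases (j : Fin 3) : j = 0 ∨ j = 1 ∨ j = 2 := by
  revert j; decide

lemma isOcc3 {n : ℕ} (σ : Equiv.Perm (Fin 3)) (π : Equiv.Perm (Fin n)) (a b c : Fin n)
    (hab : a < b) (hbc : b < c)
    (h01 : π a < π b ↔ σ 0 < σ 1) (h02 : π a < π c ↔ σ 0 < σ 2)
    (h12 : π b < π c ↔ σ 1 < σ 2) (h10 : π b < π a ↔ σ 1 < σ 0)
    (h20 : π c < π a ↔ σ 2 < σ 0) (h21 : π c < π b ↔ σ 2 < σ 1) :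
    IsOccurrence σ π ![a, b, c] := by
  constructor
  · intro x y hxy
    rcases fin3_cases x with rfl | rfl | rfl <;> rcases fin3_cases y with rfl | rfl | rfl <;>
      simp_all <;> first
        | exact hab | exact hbc | exact lt_trans hab hbc
        | exact absurd hxy (by decide)
  · intro j k
    rcases fin3_cases j with rfl | rfl | rfl <;> rcases fin3_cases k with rfl | rfl | rfl <;>
      simp only [Matrix.cons_val_zero, Matrix.cons_val_one, Matrix.head_cons,
        Matrix.cons_val_two, Matrix.tail_cons] <;>
      first
        | exact h01 | exact h02 | exact h12 | exact h10 | exact h20 | exact h21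
        | exact iff_of_false (lt_irrefl _) (lt_irrefl _)

lemma no132 {n : ℕ} (π : Equiv.Perm (Fin n)) (h : numOcc p132 π = 0)
    (a b c : Fin n) (hab : a < b) (hbc : b < c)
    (h1 : π a < π c) (h2 : π c < π b) : False := by
  rw [Fin.lt_def] at h1 h2
  refine noOcc_of_card p132 π h ![a, b, c]
    (isOcc3 p132 π a b c hab hbc ?_ ?_ ?_ ?_ ?_ ?_) <;> rw [Fin.lt_def] <;>
    first
      | exact iff_of_true (by omega) (by decide)
      | exact iff_of_false (by omega) (by decide)

lemma no213 {n : ℕ} (π : Equiv.Perm (Fin n)) (h : numOcc p213 π = 0)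
    (a b c : Fin n) (hab : a < b) (hbc : b < c)
    (h1 : π b < π a) (h2 : π a < π c) : False := by
  rw [Fin.lt_def] at h1 h2
  refine noOcc_of_card p213 π h ![a, b, c]
    (isOcc3 p213 π a b c hab hbc ?_ ?_ ?_ ?_ ?_ ?_) <;> rw [Fin.lt_def] <;>
    first
      | exact iff_of_true (by omega) (by decide)
      | exact iff_of_false (by omega) (by decide)

lemma no321 {n : ℕ} (π : Equiv.Perm (Fin n)) (h : numOcc p321 π = 0)
    (a b c : Fin n) (hab : a < b) (hbc : b < c)
    (h1 : π c < π b) (h2 : π b < π a) : False := by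
  rw [Fin.lt_def] at h1 h2
  refine noOcc_of_card p321 π h ![a, b, c]
    (isOcc3 p321 π a b c hab hbc ?_ ?_ ?_ ?_ ?_ ?_) <;> rw [Fin.lt_def] <;>
    first
      | exact iff_of_true (by omega) (by decide)
      | exact iff_of_false (by omega) (by decide)

lemma adjStep {n : ℕ} (π : Equiv.Perm (Fin n))
    (h132 : numOcc p132 π = 0) (h213 : numOcc p213 π = 0) (h321 : numOcc p321 π = 0)
    (i : ℕ) (hi1 : i < n) (hi2 : i + 1 < n) :
    (π ⟨i + 1, hi2⟩).val = (π ⟨i, hi1⟩).val + 1 ∨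
      ((π ⟨i, hi1⟩).val = n - 1 ∧ (π ⟨i + 1, hi2⟩).val = 0) := by
  set a : Fin n := ⟨i, hi1⟩ with ha
  set b : Fin n := ⟨i + 1, hi2⟩ with hb
  have hab : a < b := by rw [Fin.lt_def]; simp [ha, hb]
  have hne : π a ≠ π b := fun h => by
    have := π.injective h
    rw [ha, hb, Fin.ext_iff] at this
    simp at this
  rcases lt_or_gt_of_ne hne with hlt | hgt
  · left
    rw [Fin.lt_def] at hlt
    by_contra hne2
    have hvn : (π a).val + 1 < n := by have := (π b).isLt; omega
    set w : Fin n := ⟨(π a).val + 1, hvn⟩ with hw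
    set j := π.symm w with hjdef
    have hj : π j = w := π.apply_symm_apply w
    have hjv : (π j).val = (π a).val + 1 := by rw [hj]
    have hbv : (π b).val ≠ (π a).val + 1 := hne2
    have hja : j.val ≠ i := by
      intro h
      have : j = a := by rw [ha, Fin.ext_iff, h]
      rw [this] at hjv; omega
    have hjb : j.val ≠ i + 1 := by
      intro h
      have : j = b := by rw [hb, Fin.ext_iff, h]
      rw [this] at hjv; omega
    rcases lt_or_ge j.val i with hlt2 | hge2
    · exact no213 π h213 j a b (by rw [Fin.lt_def]; exact hlt2) hab
        (by rw [Fin.lt_def]; omega) (by rw [Fin.lt_def]; omega)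
    · have : i + 1 < j.val := by omega
      exact no132 π h132 a b j hab (by rw [Fin.lt_def]; exact this)
        (by rw [Fin.lt_def]; omega) (by rw [Fin.lt_def]; omega)
  · right
    rw [Fin.lt_def] at hgt
    constructor
    · by_contra hne2
      have hvn : (π a).val + 1 < n := by have := (π a).isLt; omega
      set w : Fin n := ⟨(π a).val + 1, hvn⟩ with hw
      set j := π.symm w with hjdef
      have hj : π j = w := π.apply_symm_apply w
      have hjv : (π j).val = (π a).val + 1 := by rw [hj]
      have hja : j.val ≠ i := by
        intro h
        have : j = a := by rw [ha, Fin.ext_iff, h]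
        rw [this] at hjv; omega
      have hjb : j.val ≠ i + 1 := by
        intro h
        have : j = b := by rw [hb, Fin.ext_iff, h]
        rw [this] at hjv; omega
      rcases lt_or_ge j.val i with hlt2 | hge2
      · exact no321 π h321 j a b (by rw [Fin.lt_def]; exact hlt2) hab
          (by rw [Fin.lt_def]; omega) (by rw [Fin.lt_def]; omega)
      · have : i + 1 < j.val := by omega
        exact no213 π h213 a b j hab (by rw [Fin.lt_def]; exact this)
          (by rw [Fin.lt_def]; omega) (by rw [Fin.lt_def]; omega)
    · by_contra hne2
      have hvn : 0 < n := by omega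
      set w : Fin n := ⟨0, hvn⟩ with hw
      set j := π.symm w with hjdef
      have hj : π j = w := π.apply_symm_apply w
      have hjv : (π j).val = 0 := by rw [hj]
      have hbv : 0 < (π b).val := by omega
      have hja : j.val ≠ i := by
        intro h
        have : j = a := by rw [ha, Fin.ext_iff, h]
        rw [this] at hjv; omega
      have hjb : j.val ≠ i + 1 := by
        intro h
        have : j = b := by rw [hb, Fin.ext_iff, h]
        rw [this] at hjv; omega
      rcases lt_or_ge j.val i with hlt2 | hge2
      · exact no132 π h132 j a b (by rw [Fin.lt_def]; exact hlt2) hab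
          (by rw [Fin.lt_def]; omega) (by rw [Fin.lt_def]; omega)
      · have : i + 1 < j.val := by omega
        exact no321 π h321 a b j hab (by rw [Fin.lt_def]; exact this)
          (by rw [Fin.lt_def]; omega) (by rw [Fin.lt_def]; omega)

lemma permExt {n : ℕ} (ρ τ : Equiv.Perm (Fin n)) (h : ∀ x, (ρ x).val = (τ x).val) :
    ρ = τ :=
  Equiv.ext fun x => Fin.ext (h x)

theorem avoid_132_213_321_characterization (n : ℕ) (hn : 1 ≤ n) :
    (∀ π : Equiv.Perm (Fin n),
      (numOcc p132 π = 0 ∧ numOcc p213 π = 0 ∧ numOcc p321 π = 0) ↔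
        ∃ k ℓ : ℕ, 1 ≤ k ∧ ∃ h : k + ℓ = n,
          π = (finCongr h).permCongr (rotBlock k ℓ)) ∧
    Nat.card {π : Equiv.Perm (Fin n) //
        numOcc p132 π = 0 ∧ numOcc p213 π = 0 ∧ numOcc p321 π = 0} = n := by
  have hn0 : 0 < n := hn
  have hmain : ∀ π : Equiv.Perm (Fin n),
      (numOcc p132 π = 0 ∧ numOcc p213 π = 0 ∧ numOcc p321 π = 0) ↔
        ∃ k ℓ : ℕ, 1 ≤ k ∧ ∃ h : k + ℓ = n,
          π = (finCongr h).permCongr (rotBlock k ℓ) := by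
    intro π
    constructor
    · rintro ⟨h132, h213, h321⟩
      set ℓ := (π ⟨0, hn0⟩).val with hℓdef
      have hℓ : ℓ < n := (π ⟨0, hn0⟩).isLt
      have hval : ∀ i (hi : i < n),
          (π ⟨i, hi⟩).val = if i + ℓ < n then i + ℓ else i + ℓ - n := by
        intro i
        induction i with
        | zero =>
          intro hi
          rw [if_pos (by omega), Nat.zero_add]
        | succ i ih =>
          intro hi
          have hi' : i < n := Nat.lt_of_succ_lt hi
          have h1 := ih hi'
          have h2 := adjStep π h132 h213 h321 i hi' hi
          have ha := (π ⟨i, hi'⟩).isLt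
          have hb := (π ⟨i + 1, hi⟩).isLt
          split_ifs at h1 ⊢ <;> omega
      refine ⟨n - ℓ, ℓ, by omega, by omega, ?_⟩
      refine permExt _ _ fun x => ?_
      rw [rotBlock_val]
      have hx := hval x.val x.isLt
      rw [Fin.eta] at hx
      rcases modForm (n := n) x.val x.isLt hℓ.le with ⟨hm, hm2⟩ | ⟨hm, hm2⟩ <;>
        split_ifs at hx <;> omega
    · rintro ⟨k, ℓ, hk, h, rfl⟩
      exact rot_avoids (by omega) _ (fun x => rotBlock_val h x)
  refine ⟨hmain, ?_⟩
  set F : Fin n → Equiv.Perm (Fin n) := fun c =>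
    (finCongr (Nat.sub_add_cancel c.isLt.le)).permCongr (rotBlock (n - c.val) c.val)
    with hF
  have hFval : ∀ (c : Fin n) (x : Fin n), ((F c) x).val = (x.val + c.val) % n :=
    fun c x => rotBlock_val _ x
  have hFinj : Function.Injective F := by
    intro c d h
    have h0 := congrArg (fun ρ : Equiv.Perm (Fin n) => (ρ ⟨0, hn0⟩).val) h
    simp only [hFval] at h0
    rw [Nat.mod_eq_of_lt (by have := c.isLt; omega),
      Nat.mod_eq_of_lt (by have := d.isLt; omega)] at h0
    exact Fin.ext (by omega)
  have hiff2 : ∀ ρ : Equiv.Perm (Fin n),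
      (numOcc p132 ρ = 0 ∧ numOcc p213 ρ = 0 ∧ numOcc p321 ρ = 0) ↔ ρ ∈ Set.range F := by
    intro ρ
    rw [hmain ρ]
    constructor
    · rintro ⟨k, ℓ, hk, h, rfl⟩
      refine ⟨⟨ℓ, by omega⟩, permExt _ _ fun x => ?_⟩
      rw [hFval, rotBlock_val]
    · rintro ⟨c, rfl⟩
      refine ⟨n - c.val, c.val, by have := c.isLt; omega,
        Nat.sub_add_cancel c.isLt.le, permExt _ _ fun x => ?_⟩
      rw [hFval]
  calc Nat.card {π : Equiv.Perm (Fin n) //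
        numOcc p132 π = 0 ∧ numOcc p213 π = 0 ∧ numOcc p321 π = 0}
      = Nat.card (Set.range F) := Nat.card_congr (Equiv.subtypeEquivRight hiff2)
    _ = Nat.card (Fin n) := Nat.card_range_of_injective hFinj
    _ = n := by simp
end

section
/- Let X be a geometric random variable with P(X = k) = 2^{−k} for k ≥ 1. Then for nonnegative integers k, ℓ with (k,ℓ) ≠ (0,0), E[ C(X,k)·C(X,ℓ) ] = 2·D(k,ℓ), where D(k,ℓ) = Σ_{i=0}^{min(k,ℓ)} (k+ℓ−i)! / ((k−i)!·(ℓ−i)!·i!) is the Delannoy number. Equivalently, Σ_{x≥1} 2^{−x}·C(x,k)·C(x,ℓ) = 2·D(k,ℓ). -/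
/-- The Delannoy number `D(k,ℓ)`, as a real number. -/
noncomputable def delannoy (k ℓ : ℕ) : ℝ :=
  ∑ i ∈ Finset.range (min k ℓ + 1),
    ((k + ℓ - i).factorial : ℝ) / ((k - i).factorial * (ℓ - i).factorial * i.factorial)

lemma aux_choose_mul_choose (k ℓ x : ℕ) :
    x.choose k * x.choose ℓ =
      ∑ i ∈ Finset.range (min k ℓ + 1),
        (k + ℓ - i).choose k * k.choose i * x.choose (k + ℓ - i) := by
  rcases lt_or_ge x k with hx | hx
  · rw [Nat.choose_eq_zero_of_lt hx, Nat.zero_mul]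
    refine (Finset.sum_eq_zero fun i hi => ?_).symm
    simp only [Finset.mem_range, Nat.lt_succ_iff, le_min_iff] at hi
    rw [Nat.choose_eq_zero_of_lt (show x < k + ℓ - i by omega), Nat.mul_zero]
  · have hxd : x = k + (x - k) := by omega
    calc x.choose k * x.choose ℓ
        = x.choose k * ∑ ij ∈ Finset.HasAntidiagonal.antidiagonal ℓ,
            k.choose ij.1 * (x - k).choose ij.2 := by
          rw [← Nat.add_choose_eq, ← hxd]
      _ = ∑ i ∈ Finset.range (ℓ + 1),
            x.choose k * (k.choose i * (x - k).choose (ℓ - i)) := by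
          rw [Finset.Nat.sum_antidiagonal_eq_sum_range_succ_mk, Finset.mul_sum]
      _ = ∑ i ∈ Finset.range (ℓ + 1),
            (k + ℓ - i).choose k * k.choose i * x.choose (k + ℓ - i) := by
          refine Finset.sum_congr rfl fun i hi => ?_
          simp only [Finset.mem_range] at hi
          have hiℓ : i ≤ ℓ := by omega
          rcases lt_or_ge x (k + ℓ - i) with hlt | hle
          · rw [Nat.choose_eq_zero_of_lt hlt,
              Nat.choose_eq_zero_of_lt (show x - k < ℓ - i by omega)]
            ring
          · have := Nat.choose_mul (n := x) (k := k + ℓ - i) (s := k) (by omega)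
            have h2 : k + ℓ - i - k = ℓ - i := by omega
            rw [h2] at this
            calc x.choose k * (k.choose i * (x - k).choose (ℓ - i))
                = k.choose i * (x.choose k * (x - k).choose (ℓ - i)) := by ring
              _ = k.choose i * (x.choose (k + ℓ - i) * (k + ℓ - i).choose k) := by rw [← this]
              _ = (k + ℓ - i).choose k * k.choose i * x.choose (k + ℓ - i) := by ring
      _ = ∑ i ∈ Finset.range (min k ℓ + 1),
            (k + ℓ - i).choose k * k.choose i * x.choose (k + ℓ - i) := by
          refine (Finset.sum_subset
            (Finset.range_subset_range.2 (Nat.succ_le_succ (min_le_right _ _)))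
            fun i hit his => ?_).symm
          simp only [Finset.mem_range, Nat.lt_succ_iff, le_min_iff, not_and, not_le]
            at hit his
          rw [Nat.choose_eq_zero_of_lt (Nat.lt_of_le_of_lt (Nat.le_refl k) (by omega))]
          ring
  
lemma aux_hasSum_choose (n : ℕ) :
    HasSum (fun x : ℕ => ((2 : ℝ)⁻¹) ^ x * (x.choose n)) 2 := by
  have hr : ‖(2 : ℝ)⁻¹‖ < 1 := by rw [Real.norm_eq_abs, abs_lt]; norm_num
  have H := hasSum_choose_mul_geometric_of_norm_lt_one (𝕜 := ℝ) n hr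
  have H2 := H.mul_left (((2 : ℝ)⁻¹) ^ n)
  have hval : ((2:ℝ)⁻¹) ^ n * (1 / (1 - 2⁻¹) ^ (n + 1)) = 2 := by
    rw [show (1 : ℝ) - 2⁻¹ = 2⁻¹ by norm_num, pow_succ]
    field_simp
  rw [hval] at H2
  have H3 : HasSum (fun m : ℕ => ((2:ℝ)⁻¹) ^ (m + n) * ((m + n).choose n)) 2 := by
    refine H2.congr_fun fun m => ?_
    rw [pow_add]; ring
  have := (hasSum_nat_add_iff (f := fun x : ℕ => ((2 : ℝ)⁻¹) ^ x * (x.choose n)) n).mp H3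
  have hz : ∑ i ∈ Finset.range n, ((2 : ℝ)⁻¹) ^ i * (i.choose n) = 0 := by
    refine Finset.sum_eq_zero fun i hi => ?_
    simp only [Finset.mem_range] at hi
    rw [Nat.choose_eq_zero_of_lt hi]; simp
  rwa [hz, add_zero] at this

/-- For `X ~ Ge(1/2)` with `P(X = x) = 2⁻ˣ` for `x ≥ 1`,
`E[C(X,k)·C(X,ℓ)] = 2·D(k,ℓ)` whenever `(k,ℓ) ≠ (0,0)`. -/
theorem geometric_binomial_moment (k ℓ : ℕ) (h : ¬ (k = 0 ∧ ℓ = 0)) :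
    ∑' x : ℕ, ((2 : ℝ)⁻¹) ^ x * (x.choose k) * (x.choose ℓ) = 2 * delannoy k ℓ := by
  have Hsum : HasSum (fun x : ℕ => ∑ i ∈ Finset.range (min k ℓ + 1),
      (((k + ℓ - i).choose k * k.choose i : ℕ) : ℝ) * (((2 : ℝ)⁻¹) ^ x * (x.choose (k + ℓ - i))))
      (∑ i ∈ Finset.range (min k ℓ + 1),
        (((k + ℓ - i).choose k * k.choose i : ℕ) : ℝ) * 2) :=
    hasSum_sum fun i _ => (aux_hasSum_choose (k + ℓ - i)).mul_left _
  have Hsum' : HasSum (fun x : ℕ => ((2 : ℝ)⁻¹) ^ x * (x.choose k) * (x.choose ℓ))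
      (∑ i ∈ Finset.range (min k ℓ + 1),
        (((k + ℓ - i).choose k * k.choose i : ℕ) : ℝ) * 2) := by
    refine Hsum.congr_fun fun x => ?_
    rw [mul_assoc, ← Nat.cast_mul, aux_choose_mul_choose k ℓ x, Nat.cast_sum, Finset.mul_sum]
    refine Finset.sum_congr rfl fun i _ => ?_
    push_cast
    ring
  rw [Hsum'.tsum_eq, delannoy, Finset.mul_sum]
  refine Finset.sum_congr rfl fun i hi => ?_
  simp only [Finset.mem_range] at hi
  have hik : i ≤ k := by omega
  have hiℓ : i ≤ ℓ := by omega
  rw [Nat.cast_mul, Nat.cast_choose ℝ (show k ≤ k + ℓ - i by omega),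
    Nat.cast_choose ℝ hik, show k + ℓ - i - k = ℓ - i by omega]
  have h1 : (0:ℝ) < k.factorial := by positivity
  have h2 : (0:ℝ) < i.factorial := by positivity
  have h3 : (0:ℝ) < (ℓ - i).factorial := by positivity
  have h4 : (0:ℝ) < (k - i).factorial := by positivity
  field_simp
end

section
/- Let π ∈ S_n avoid 231 and 312, with block lengths L_1, ..., L_B (each block is decreasing), and let σ avoid 231 and 312 with block lengths ℓ_1, ..., ℓ_b. Then the number of occurrences of σ in π equals the sum over 1 ≤ i_1 < ... < i_b ≤ B of the product over j = 1..b of binomial(L_{i_j}, ℓ_j). -/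
/-- The composition (direct sum) `σ * τ` of two permutations. -/
def permComp {m n : ℕ} (σ : Equiv.Perm (Fin m)) (τ : Equiv.Perm (Fin n)) :
    Equiv.Perm (Fin (m + n)) :=
  Equiv.permCongr finSumFinEquiv (Equiv.sumCongr σ τ)

/-- Permutations of arbitrary (finite) length. -/
def SPerm := Σ n : ℕ, Equiv.Perm (Fin n)

def SPerm.comp (p q : SPerm) : SPerm := ⟨p.1 + q.1, permComp p.2 q.2⟩

/-- The permutation whose blocks are decreasing with lengths given by `L`. -/
def decPerm : (L : List ℕ) → Equiv.Perm (Fin L.sum)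
  | [] => 1
  | ℓ :: L => (finCongr (by simp) : Fin (ℓ + L.sum) ≃ Fin ((ℓ :: L).sum)).permCongr
      (permComp (Fin.revPerm : Equiv.Perm (Fin ℓ)) (decPerm L))

/-- Block index of position `x` for block lengths `L`. -/
def blkN : List ℕ → ℕ → ℕ
  | [], _ => 0
  | ℓ :: L, x => if x < ℓ then 0 else blkN L (x - ℓ) + 1

/-- Position within the block. -/
def posN : List ℕ → ℕ → ℕ
  | [], x => x
  | ℓ :: L, x => if x < ℓ then x else posN L (x - ℓ)

theorem blkN_lt : ∀ {L : List ℕ} {x : ℕ}, x < L.sum → blkN L x < L.length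
  | [], x, h => by simp at h
  | ℓ :: L, x, h => by
    rw [List.sum_cons] at h
    by_cases hx : x < ℓ
    · simp [blkN, hx]
    · simpa [blkN, hx] using blkN_lt (L := L) (x := x - ℓ) (by omega)

theorem posN_lt : ∀ {L : List ℕ} {x : ℕ}, x < L.sum → posN L x < L.getD (blkN L x) 0
  | [], x, h => by simp at h
  | ℓ :: L, x, h => by
    rw [List.sum_cons] at h
    by_cases hx : x < ℓ
    · simpa [blkN, posN, hx] using hx
    · simpa [blkN, posN, hx] using posN_lt (L := L) (x := x - ℓ) (by omega)

theorem blkN_take : ∀ {L : List ℕ} {i r : ℕ}, i < L.length → r < L.getD i 0 →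
    blkN L ((L.take i).sum + r) = i
  | [], i, r, h, _ => by simp at h
  | ℓ :: L, 0, r, h, hr => by
    simp only [List.getD_cons_zero] at hr
    simp [blkN, hr]
  | ℓ :: L, i + 1, r, h, hr => by
    simp only [List.length_cons, Nat.add_lt_add_iff_right] at h
    simp only [List.getD_cons_succ] at hr
    have := blkN_take (L := L) (i := i) (r := r) h hr
    simp only [List.take_succ_cons, List.sum_cons, blkN]
    have hlt : ¬ (ℓ + (L.take i).sum + r < ℓ) := by omega
    simp only [hlt, if_false]
    rw [show ℓ + (L.take i).sum + r - ℓ = (L.take i).sum + r by omega, this]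

theorem posN_take : ∀ {L : List ℕ} {i r : ℕ}, i < L.length → r < L.getD i 0 →
    posN L ((L.take i).sum + r) = r
  | [], i, r, h, _ => by simp at h
  | ℓ :: L, 0, r, h, hr => by
    simp only [List.getD_cons_zero] at hr
    simp [posN, hr]
  | ℓ :: L, i + 1, r, h, hr => by
    simp only [List.length_cons, Nat.add_lt_add_iff_right] at h
    simp only [List.getD_cons_succ] at hr
    have := posN_take (L := L) (i := i) (r := r) h hr
    simp only [List.take_succ_cons, List.sum_cons, posN]
    have hlt : ¬ (ℓ + (L.take i).sum + r < ℓ) := by omega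
    simp only [hlt, if_false]
    rw [show ℓ + (L.take i).sum + r - ℓ = (L.take i).sum + r by omega, this]

theorem off_decomp : ∀ {L : List ℕ} {x : ℕ}, x < L.sum →
    (L.take (blkN L x)).sum + posN L x = x
  | [], x, h => by simp at h
  | ℓ :: L, x, h => by
    rw [List.sum_cons] at h
    by_cases hx : x < ℓ
    · simp [blkN, posN, hx]
    · have := off_decomp (L := L) (x := x - ℓ) (by omega)
      simp only [blkN, posN, hx, if_false, List.take_succ_cons, List.sum_cons]
      omega

theorem blkN_mono : ∀ {L : List ℕ} {x y : ℕ}, x ≤ y → blkN L x ≤ blkN L y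
  | [], x, y, h => le_refl _
  | ℓ :: L, x, y, h => by
    by_cases hx : x < ℓ
    · simp [blkN, hx]
    · rw [blkN, if_neg hx, blkN, if_neg (by omega)]
      exact Nat.add_le_add_right (blkN_mono (by omega)) 1

theorem off_add_lt : ∀ {L : List ℕ} {i r : ℕ}, i < L.length → r < L.getD i 0 →
    (L.take i).sum + r < L.sum
  | [], i, r, h, _ => by simp at h
  | ℓ :: L, 0, r, h, hr => by
    simp only [List.getD_cons_zero] at hr
    simp only [List.take_zero, List.sum_nil, List.sum_cons]
    omega
  | ℓ :: L, i + 1, r, h, hr => by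
    simp only [List.length_cons, Nat.add_lt_add_iff_right] at h
    simp only [List.getD_cons_succ] at hr
    have := off_add_lt (L := L) (i := i) (r := r) h hr
    simp only [List.take_succ_cons, List.sum_cons]
    omega

theorem off_succ : ∀ {L : List ℕ} {i : ℕ}, i < L.length →
    (L.take (i + 1)).sum = (L.take i).sum + L.getD i 0
  | [], i, h => by simp at h
  | ℓ :: L, 0, h => by simp
  | ℓ :: L, i + 1, h => by
    simp only [List.length_cons, Nat.add_lt_add_iff_right] at h
    have := off_succ (L := L) (i := i) h
    simp only [List.take_succ_cons, List.sum_cons, List.getD_cons_succ]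
    omega

theorem off_mono : ∀ {L : List ℕ} {i k : ℕ}, i ≤ k → (L.take i).sum ≤ (L.take k).sum
  | [], i, k, h => by simp
  | ℓ :: L, 0, k, h => by simp
  | ℓ :: L, i + 1, k, h => by
    obtain ⟨k, rfl⟩ : ∃ k', k = k' + 1 := ⟨k - 1, by omega⟩
    simp only [List.take_succ_cons, List.sum_cons]
    exact Nat.add_le_add_left (off_mono (by omega)) ℓ

theorem off_add_le {L : List ℕ} {i k : ℕ} (hik : i < k) (hi : i < L.length) :
    (L.take i).sum + L.getD i 0 ≤ (L.take k).sum := by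
  rw [← off_succ hi]; exact off_mono hik

theorem getD_get {L : List ℕ} (i : Fin L.length) : L.getD (i : ℕ) 0 = L.get i := by
  rw [List.getD_eq_getElem?_getD, List.getElem?_eq_getElem i.2]; rfl

theorem permComp_val {m n : ℕ} (σ : Equiv.Perm (Fin m)) (τ : Equiv.Perm (Fin n))
    (x : ℕ) (hx : x < m + n) :
    (permComp σ τ ⟨x, hx⟩ : ℕ) =
      if h : x < m then (σ ⟨x, h⟩ : ℕ) else m + (τ ⟨x - m, by omega⟩ : ℕ) := by
  by_cases h : x < m
  · have e : finSumFinEquiv.symm (⟨x, hx⟩ : Fin (m + n)) = Sum.inl ⟨x, h⟩ := by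
      rw [Equiv.symm_apply_eq, finSumFinEquiv_apply_left]
      exact Fin.ext rfl
    rw [dif_pos h]
    simp [permComp, Equiv.permCongr_apply, e]
  · have e : finSumFinEquiv.symm (⟨x, hx⟩ : Fin (m + n)) = Sum.inr ⟨x - m, by omega⟩ := by
      rw [Equiv.symm_apply_eq, finSumFinEquiv_apply_right]
      exact Fin.ext (by simp; omega)
    rw [dif_neg h]
    simp [permComp, Equiv.permCongr_apply, e]

theorem decPerm_cons_val (ℓ : ℕ) (L : List ℕ) (x : ℕ) (hx : x < (ℓ :: L).sum) :
    (decPerm (ℓ :: L) ⟨x, hx⟩ : ℕ) =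
      if h : x < ℓ then ℓ - 1 - x
      else ℓ + (decPerm L ⟨x - ℓ, by simp [List.sum_cons] at hx; omega⟩ : ℕ) := by
  have hx' : x < ℓ + L.sum := by simpa [List.sum_cons] using hx
  have h0 : (decPerm (ℓ :: L) ⟨x, hx⟩ : ℕ)
      = (permComp (Fin.revPerm : Equiv.Perm (Fin ℓ)) (decPerm L) ⟨x, hx'⟩ : ℕ) := by
    simp [decPerm, Equiv.permCongr_apply]
    rfl
  rw [h0, permComp_val]
  by_cases h : x < ℓ
  · rw [dif_pos h, dif_pos h]
    simp only [Fin.revPerm_apply, Fin.val_rev]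
    omega
  · rw [dif_neg h, dif_neg h]

theorem decPerm_lt_iff : ∀ (L : List ℕ) (x y : ℕ) (hx : x < L.sum) (hy : y < L.sum),
    ((decPerm L ⟨x, hx⟩ : ℕ) < (decPerm L ⟨y, hy⟩ : ℕ) ↔
      ((blkN L x < blkN L y) ∨ (blkN L x = blkN L y ∧ y < x)))
  | [], x, y, hx, hy => by simp at hx
  | ℓ :: L, x, y, hx, hy => by
    rw [decPerm_cons_val, decPerm_cons_val]
    by_cases h1 : x < ℓ <;> by_cases h2 : y < ℓ
    · rw [dif_pos h1, dif_pos h2]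
      simp only [blkN, if_pos h1, if_pos h2, true_and, Nat.lt_irrefl, false_or]
      omega
    · rw [dif_pos h1, dif_neg h2]
      simp only [blkN, if_pos h1, if_neg h2]
      have := (decPerm L ⟨y - ℓ, by simp [List.sum_cons] at hy; omega⟩).2
      omega
    · rw [dif_neg h1, dif_pos h2]
      simp only [blkN, if_neg h1, if_pos h2]
      have := (decPerm L ⟨x - ℓ, by simp [List.sum_cons] at hx; omega⟩).2
      omega
    · rw [dif_neg h1, dif_neg h2]
      simp only [blkN, if_neg h1, if_neg h2]
      have := decPerm_lt_iff L (x - ℓ) (y - ℓ) (by simp [List.sum_cons] at hx; omega)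
        (by simp [List.sum_cons] at hy; omega)
      omega

theorem occ_iff (L ℓs : List ℕ) (f : Fin ℓs.sum → Fin L.sum) :
    IsOccurrence (decPerm ℓs) (decPerm L) f ↔
      (StrictMono f ∧ ∀ j k : Fin ℓs.sum,
        (blkN ℓs (j : ℕ) = blkN ℓs (k : ℕ) ↔ blkN L (f j : ℕ) = blkN L (f k : ℕ))) := by
  constructor
  · rintro ⟨hm, H⟩
    refine ⟨hm, ?_⟩
    have claim : ∀ j k : Fin ℓs.sum, j < k →
        (blkN ℓs (j : ℕ) = blkN ℓs (k : ℕ) ↔ blkN L (f j : ℕ) = blkN L (f k : ℕ)) := by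
      intro j k hjk
      have H' := H k j
      rw [Fin.lt_def, Fin.lt_def] at H'
      have A : ((decPerm L (f k) : ℕ) < (decPerm L (f j) : ℕ)) ↔ _ :=
        decPerm_lt_iff L (f k : ℕ) (f j : ℕ) (f k).2 (f j).2
      have B : ((decPerm ℓs k : ℕ) < (decPerm ℓs j : ℕ)) ↔ _ :=
        decPerm_lt_iff ℓs (k : ℕ) (j : ℕ) k.2 j.2
      have key := (A.symm.trans H').trans B
      have m1 : blkN ℓs (j : ℕ) ≤ blkN ℓs (k : ℕ) := blkN_mono hjk.le
      have m2 : blkN L (f j : ℕ) ≤ blkN L (f k : ℕ) := blkN_mono (hm hjk).le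
      have hf : (f j : ℕ) < (f k : ℕ) := hm hjk
      have hj : (j : ℕ) < (k : ℕ) := hjk
      omega
    intro j k
    rcases lt_trichotomy j k with h | h | h
    · exact claim j k h
    · subst h; simp
    · have := claim k j h
      omega
  · rintro ⟨hm, C⟩
    refine ⟨hm, ?_⟩
    intro j k
    rw [Fin.lt_def, Fin.lt_def]
    have A : ((decPerm L (f j) : ℕ) < (decPerm L (f k) : ℕ)) ↔ _ :=
      decPerm_lt_iff L (f j : ℕ) (f k : ℕ) (f j).2 (f k).2
    have B : ((decPerm ℓs j : ℕ) < (decPerm ℓs k : ℕ)) ↔ _ :=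
      decPerm_lt_iff ℓs (j : ℕ) (k : ℕ) j.2 k.2
    rw [A, B]
    have c := C j k
    rcases lt_trichotomy j k with h | h | h
    · have m1 : blkN ℓs (j : ℕ) ≤ blkN ℓs (k : ℕ) := blkN_mono h.le
      have m2 : blkN L (f j : ℕ) ≤ blkN L (f k : ℕ) := blkN_mono (hm h).le
      have hf : (f j : ℕ) < (f k : ℕ) := hm h
      have hj : (j : ℕ) < (k : ℕ) := h
      omega
    · subst h; omega
    · have m1 : blkN ℓs (k : ℕ) ≤ blkN ℓs (j : ℕ) := blkN_mono h.le
      have m2 : blkN L (f k : ℕ) ≤ blkN L (f j : ℕ) := blkN_mono (hm h).le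
      have hf : (f k : ℕ) < (f j : ℕ) := hm h
      have hj : (k : ℕ) < (j : ℕ) := h
      omega

open scoped Classical

theorem card_strictMono_fin (a c : ℕ) :
    Nat.card {h : Fin a → Fin c // StrictMono h} = Nat.choose c a := by
  rw [Nat.card_eq_fintype_card]
  have e : {h : Fin a → Fin c // StrictMono h} ≃ {s : Finset (Fin c) // s.card = a} :=
    { toFun := fun h => ⟨Finset.univ.image h.1, by
        rw [Finset.card_image_of_injective _ h.2.injective, Finset.card_univ, Fintype.card_fin]⟩
      invFun := fun s => ⟨s.1.orderEmbOfFin s.2, (s.1.orderEmbOfFin s.2).strictMono⟩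
      left_inv := fun h => Subtype.ext
        (Finset.orderEmbOfFin_unique _
          (fun x => Finset.mem_image_of_mem _ (Finset.mem_univ x)) h.2).symm
      right_inv := fun s => by
        apply Subtype.ext
        apply Finset.coe_injective
        rw [Finset.coe_image, Finset.coe_univ, Set.image_univ, Finset.range_orderEmbOfFin] }
  rw [Fintype.card_congr e, Fintype.card_subtype]
  have : Finset.univ.filter (fun s : Finset (Fin c) => s.card = a)
      = Finset.powersetCard a Finset.univ := by
    rw [Finset.powersetCard_eq_filter, Finset.powerset_univ]
  rw [this, Finset.card_powersetCard, Finset.card_univ, Fintype.card_fin]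

section Main

variable (L ℓs : List ℕ)

/-- block index of `t` as a `Fin`. -/
def bS (t : Fin ℓs.sum) : Fin ℓs.length := ⟨blkN ℓs (t : ℕ), blkN_lt t.2⟩

/-- the `t`-th element of block `j`. -/
def embS (j : Fin ℓs.length) (t : Fin (ℓs.get j)) : Fin ℓs.sum :=
  ⟨(ℓs.take (j : ℕ)).sum + (t : ℕ), off_add_lt j.2 (by rw [getD_get]; exact t.2)⟩

theorem bS_embS (j : Fin ℓs.length) (t : Fin (ℓs.get j)) : bS ℓs (embS ℓs j t) = j :=
  Fin.ext (blkN_take j.2 (by rw [getD_get]; exact t.2))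

theorem posN_embS (j : Fin ℓs.length) (t : Fin (ℓs.get j)) :
    posN ℓs ((embS ℓs j t : ℕ)) = (t : ℕ) :=
  posN_take j.2 (by rw [getD_get]; exact t.2)

variable (g : Fin ℓs.length → Fin L.length)

/-- The set of strictly monotone maps sending block `j` of `ℓs` into block `g j` of `L`. -/
def Tset := {f : Fin ℓs.sum → Fin L.sum //
  StrictMono f ∧ ∀ t : Fin ℓs.sum, blkN L (f t : ℕ) = (g (bS ℓs t) : ℕ)}

def Pset := ∀ j : Fin ℓs.length, {h : Fin (ℓs.get j) → Fin (L.get (g j)) // StrictMono h}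

/-- untyped application of a family in `Pset`. -/
def applyP (p : Pset L ℓs g) (j : Fin ℓs.length) (x : ℕ) : ℕ :=
  if h : x < ℓs.get j then ((p j).1 ⟨x, h⟩ : ℕ) else 0

theorem applyP_lt (p : Pset L ℓs g) (j : Fin ℓs.length) {x : ℕ} (hx : x < ℓs.get j) :
    applyP L ℓs g p j x < L.getD ((g j : ℕ)) 0 := by
  rw [applyP, dif_pos hx, getD_get]
  exact ((p j).1 ⟨x, hx⟩).2

theorem applyP_mono (p : Pset L ℓs g) (j : Fin ℓs.length) {x y : ℕ} (hxy : x < y)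
    (hy : y < ℓs.get j) : applyP L ℓs g p j x < applyP L ℓs g p j y := by
  rw [applyP, applyP, dif_pos hy, dif_pos (lt_trans hxy hy)]
  exact (p j).2 (show x < y from hxy)

variable (hg : StrictMono g)

def tpEquiv : Tset L ℓs g ≃ Pset L ℓs g where
  toFun f := fun j => ⟨fun t => ⟨posN L ((f.1 (embS ℓs j t) : ℕ)), by
      have h2 : blkN L ((f.1 (embS ℓs j t) : ℕ)) = ((g j : ℕ)) := by
        rw [f.2.2 (embS ℓs j t), bS_embS]
      have := posN_lt (f.1 (embS ℓs j t)).2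
      rw [h2, getD_get] at this
      exact this⟩, by
    intro t t' htt
    simp only [Fin.mk_lt_mk]
    have hemb : embS ℓs j t < embS ℓs j t' := by
      simp only [embS, Fin.mk_lt_mk]
      exact Nat.add_lt_add_left htt _
    have hf := f.2.1 hemb
    have e1 := off_decomp (f.1 (embS ℓs j t)).2
    have e2 := off_decomp (f.1 (embS ℓs j t')).2
    have b1 : blkN L ((f.1 (embS ℓs j t) : ℕ)) = ((g j : ℕ)) := by
      rw [f.2.2 (embS ℓs j t), bS_embS]
    have b2 : blkN L ((f.1 (embS ℓs j t') : ℕ)) = ((g j : ℕ)) := by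
      rw [f.2.2 (embS ℓs j t'), bS_embS]
    rw [b1] at e1
    rw [b2] at e2
    have hflt : (f.1 (embS ℓs j t) : ℕ) < (f.1 (embS ℓs j t') : ℕ) := hf
    omega⟩
  invFun p := ⟨fun t => ⟨(L.take ((g (bS ℓs t)) : ℕ)).sum + applyP L ℓs g p (bS ℓs t) (posN ℓs t),
      off_add_lt (g (bS ℓs t)).2 (applyP_lt L ℓs g p _ (by
        rw [← getD_get]; exact posN_lt t.2))⟩, by
    constructor
    · intro t t' htt
      simp only [Fin.mk_lt_mk]
      have hb : blkN ℓs (t : ℕ) ≤ blkN ℓs (t' : ℕ) := blkN_mono htt.le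
      rcases eq_or_lt_of_le hb with hb | hb
      · have e : bS ℓs t' = bS ℓs t := Fin.ext hb.symm
        rw [e]
        have e1 := off_decomp t.2
        have e2 := off_decomp t'.2
        rw [show blkN ℓs (t' : ℕ) = blkN ℓs (t : ℕ) from hb.symm] at e2
        have hpos : posN ℓs (t : ℕ) < posN ℓs (t' : ℕ) := by
          have : (t : ℕ) < (t' : ℕ) := htt
          omega
        have hlt' : posN ℓs (t' : ℕ) < ℓs.get (bS ℓs t) := by
          rw [← getD_get]
          exact (show (bS ℓs t : ℕ) = blkN ℓs (t' : ℕ) from hb) ▸ posN_lt t'.2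
        exact Nat.add_lt_add_left (applyP_mono L ℓs g p _ hpos hlt') _
      · have hgg : g (bS ℓs t) < g (bS ℓs t') := hg (show bS ℓs t < bS ℓs t' from hb)
        have h1 : applyP L ℓs g p (bS ℓs t) (posN ℓs t) < L.getD ((g (bS ℓs t)) : ℕ) 0 :=
          applyP_lt L ℓs g p _ (by rw [← getD_get]; exact posN_lt t.2)
        have h2 : (L.take ((g (bS ℓs t)) : ℕ)).sum + L.getD ((g (bS ℓs t)) : ℕ) 0
            ≤ (L.take ((g (bS ℓs t')) : ℕ)).sum := off_add_le hgg (g (bS ℓs t)).2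
        omega
    · intro t
      exact blkN_take (g (bS ℓs t)).2 (applyP_lt L ℓs g p _ (by
        rw [← getD_get]; exact posN_lt t.2))⟩
  right_inv := by
    intro p
    funext j
    apply Subtype.ext
    funext t
    apply Fin.ext
    show posN L _ = _
    have e1 : bS ℓs (embS ℓs j t) = j := bS_embS ℓs j t
    simp only [e1, posN_embS]
    have hap : applyP L ℓs g p j (t : ℕ) = ((p j).1 t : ℕ) := by
      rw [applyP, dif_pos t.2]
    rw [hap]
    exact posN_take (g j).2 (by rw [getD_get]; exact ((p j).1 t).2)
  left_inv := by
    intro f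
    apply Subtype.ext
    funext t
    apply Fin.ext
    show (L.take ((g (bS ℓs t)) : ℕ)).sum + applyP L ℓs g _ (bS ℓs t) (posN ℓs t) = _
    have hpos : posN ℓs (t : ℕ) < ℓs.get (bS ℓs t) := by
      rw [← getD_get]; exact posN_lt t.2
    unfold applyP
    rw [dif_pos hpos]
    have hemb : embS ℓs (bS ℓs t) ⟨posN ℓs (t : ℕ), hpos⟩ = t :=
      Fin.ext (off_decomp t.2)
    show (L.take ((g (bS ℓs t)) : ℕ)).sum + posN L ((f.1 (embS ℓs (bS ℓs t) _) : ℕ)) = _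
    rw [hemb]
    have hb : (g (bS ℓs t) : ℕ) = blkN L ((f.1 t : ℕ)) := (f.2.2 t).symm
    rw [hb]
    exact off_decomp (f.1 t).2

theorem card_Tset (hg : StrictMono g) : Nat.card (Tset L ℓs g) =
    ∏ j : Fin ℓs.length, Nat.choose (L.get (g j)) (ℓs.get j) := by
  rw [Nat.card_congr (tpEquiv L ℓs g hg), Pset, Nat.card_pi]
  exact Finset.prod_congr rfl fun j _ => card_strictMono_fin _ _

end Main

section Assemble

variable (L ℓs : List ℕ) (hl : ∀ x ∈ ℓs, 1 ≤ x)

def repS (j : Fin ℓs.length) : Fin ℓs.sum :=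
  ⟨(ℓs.take (j : ℕ)).sum, by
    have h0 : (0 : ℕ) < ℓs.getD (j : ℕ) 0 := by
      rw [getD_get]; exact hl _ (ℓs.get_mem j)
    have := off_add_lt j.2 h0
    omega⟩

theorem bS_repS (j : Fin ℓs.length) : bS ℓs (repS ℓs hl j) = j := by
  apply Fin.ext
  have h0 : (0 : ℕ) < ℓs.getD (j : ℕ) 0 := by
    rw [getD_get]; exact hl _ (ℓs.get_mem j)
  have := blkN_take j.2 h0
  exact this

abbrev Occt := {f : Fin ℓs.sum → Fin L.sum // IsOccurrence (decPerm ℓs) (decPerm L) f}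

def Phi (x : Occt L ℓs) : Fin ℓs.length → Fin L.length :=
  fun j => ⟨blkN L ((x.1 (repS ℓs hl j) : ℕ)), blkN_lt (x.1 _).2⟩

theorem occ_blk (x : Occt L ℓs) (t : Fin ℓs.sum) :
    blkN L ((x.1 t : ℕ)) = (Phi L ℓs hl x (bS ℓs t) : ℕ) := by
  have C := ((occ_iff L ℓs x.1).1 x.2).2
  exact (C t (repS ℓs hl (bS ℓs t))).mp (congrArg Fin.val (bS_repS ℓs hl (bS ℓs t))).symm

theorem Phi_mono (x : Occt L ℓs) : StrictMono (Phi L ℓs hl x) := by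
  intro j k hjk
  have hx := (occ_iff L ℓs x.1).1 x.2
  have hrep : repS ℓs hl j < repS ℓs hl k := by
    show ((repS ℓs hl j : ℕ)) < ((repS ℓs hl k : ℕ))
    have h0 : (0 : ℕ) < ℓs.getD (j : ℕ) 0 := by
      rw [getD_get]; exact hl _ (ℓs.get_mem j)
    have := off_add_le (show (j : ℕ) < (k : ℕ) from hjk) j.2
    simp only [repS]
    omega
  have hle : blkN L ((x.1 (repS ℓs hl j) : ℕ)) ≤ blkN L ((x.1 (repS ℓs hl k) : ℕ)) :=
    blkN_mono (hx.1 hrep).le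
  have hne : blkN L ((x.1 (repS ℓs hl j) : ℕ)) ≠ blkN L ((x.1 (repS ℓs hl k) : ℕ)) := by
    intro e
    have heq := (hx.2 (repS ℓs hl j) (repS ℓs hl k)).mpr e
    have a1 : blkN ℓs ((repS ℓs hl j : ℕ)) = (j : ℕ) := congrArg Fin.val (bS_repS ℓs hl j)
    have a2 : blkN ℓs ((repS ℓs hl k : ℕ)) = (k : ℕ) := congrArg Fin.val (bS_repS ℓs hl k)
    have : (j : ℕ) = (k : ℕ) := by omega
    exact absurd (Fin.ext this : j = k) hjk.ne
  exact Fin.lt_def.mpr (lt_of_le_of_ne hle hne)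

noncomputable def fiberEquiv (g : Fin ℓs.length → Fin L.length) (hg : StrictMono g) :
    {x : Occt L ℓs // Phi L ℓs hl x = g} ≃ Tset L ℓs g where
  toFun x := ⟨x.1.1, ((occ_iff L ℓs x.1.1).1 x.1.2).1, fun t => by
    rw [occ_blk L ℓs hl x.1 t, x.2]⟩
  invFun f := ⟨⟨f.1, (occ_iff L ℓs f.1).2 ⟨f.2.1, fun t t' => by
      constructor
      · intro e
        rw [f.2.2 t, f.2.2 t']
        exact congrArg Fin.val (congrArg g (Fin.ext e))
      · intro e
        rw [f.2.2 t, f.2.2 t'] at e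
        exact congrArg Fin.val (hg.injective (Fin.ext e))⟩⟩, by
    funext j
    apply Fin.ext
    show blkN L ((f.1 (repS ℓs hl j) : ℕ)) = (g j : ℕ)
    rw [f.2.2 (repS ℓs hl j), bS_repS]⟩
  left_inv x := Subtype.ext (Subtype.ext rfl)
  right_inv f := Subtype.ext rfl

end Assemble


open scoped Classical in
theorem numOcc_decPerm (L ℓs : List ℕ) (hL : ∀ x ∈ L, 1 ≤ x) (hl : ∀ x ∈ ℓs, 1 ≤ x) :
    numOcc (decPerm ℓs) (decPerm L) =
      ∑ g ∈ Finset.univ.filter (fun g : Fin ℓs.length → Fin L.length => StrictMono g),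
        ∏ j : Fin ℓs.length, Nat.choose (L.get (g j)) (ℓs.get j) := by
  rw [numOcc, Nat.card_eq_fintype_card]
  rw [Fintype.card_congr (Equiv.sigmaFiberEquiv (Phi L ℓs hl)).symm, Fintype.card_sigma]
  rw [Finset.sum_filter]
  apply Finset.sum_congr rfl
  intro g _
  split
  · next hg =>
    rw [← Nat.card_eq_fintype_card, Nat.card_congr (fiberEquiv L ℓs hl g hg)]
    exact card_Tset L ℓs g hg
  · next hg =>
    rw [Fintype.card_eq_zero_iff]
    exact ⟨fun x => hg (x.2 ▸ Phi_mono L ℓs hl x.1)⟩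
end
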